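/- If matrices A ∈ ℝ^{m×n} and B ∈ ℝ^{n×p} satisfy A_lo ≤ A ≤ A_up and B_lo ≤ B ≤ B_up entrywise, then A_lo⁺B_lo⁺ − A_up⁺B_lo⁻ − A_lo⁻B_up⁺ + A_up⁻B_up⁻ ≤ AB ≤ A_up⁺B_up⁺ − A_lo⁺B_up⁻ − A_up⁻B_lo⁺ + A_lo⁻B_lo⁻ entrywise. -/
import Mathlib


/-- Entrywise positive part of a matrix. -/
noncomputable def matPos {m n : ℕ} (M : Matrix (Fin m) (Fin n) ℝ) : Matrix (Fin m) (Fin n) ℝ :=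
  M.map (fun a => max a 0)

/-- Entrywise negative part: M⁻ = M⁺ − M. -/
noncomputable def matNeg {m n : ℕ} (M : Matrix (Fin m) (Fin n) ℝ) : Matrix (Fin m) (Fin n) ℝ :=
  matPos M - M

private lemma posp_nonneg (x : ℝ) : 0 ≤ max x 0 := le_max_right _ _
private lemma negp_nonneg (x : ℝ) : 0 ≤ max x 0 - x := by
  simp [sub_nonneg, le_max_left]
private lemma pos_mono {x y : ℝ} (h : x ≤ y) : max x 0 ≤ max y 0 :=
  max_le_max h le_rfl
private lemma neg_anti {x y : ℝ} (h : x ≤ y) : max y 0 - y ≤ max x 0 - x := by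
  rcases le_or_gt x 0 with hx | hx
  · rcases le_or_gt y 0 with hy | hy
    · simp [max_eq_right hx, max_eq_right hy]; linarith
    · simp [max_eq_right hx, max_eq_left hy.le]; linarith
  · have hy : 0 < y := lt_of_lt_of_le hx h
    simp [max_eq_left hx.le, max_eq_left hy.le]

private lemma scalar_bound (a alo aup b blo bup : ℝ)
    (h1 : alo ≤ a) (h2 : a ≤ aup) (h3 : blo ≤ b) (h4 : b ≤ bup) :
    max alo 0 * max blo 0 - max aup 0 * (max blo 0 - blo)
      - (max alo 0 - alo) * max bup 0 + (max aup 0 - aup) * (max bup 0 - bup) ≤ a * b ∧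
    a * b ≤ max aup 0 * max bup 0 - max alo 0 * (max bup 0 - bup)
      - (max aup 0 - aup) * max blo 0 + (max alo 0 - alo) * (max blo 0 - blo) := by
  have key : a * b = max a 0 * max b 0 - max a 0 * (max b 0 - b)
      - (max a 0 - a) * max b 0 + (max a 0 - a) * (max b 0 - b) := by ring
  constructor
  · rw [key]
    have t1 : max alo 0 * max blo 0 ≤ max a 0 * max b 0 :=
      mul_le_mul (pos_mono h1) (pos_mono h3) (posp_nonneg _) (posp_nonneg _)
    have t2 : max a 0 * (max b 0 - b) ≤ max aup 0 * (max blo 0 - blo) :=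
      mul_le_mul (pos_mono h2) (neg_anti h3) (negp_nonneg _) (posp_nonneg _)
    have t3 : (max a 0 - a) * max b 0 ≤ (max alo 0 - alo) * max bup 0 :=
      mul_le_mul (neg_anti h1) (pos_mono h4) (posp_nonneg _) (negp_nonneg _)
    have t4 : (max aup 0 - aup) * (max bup 0 - bup) ≤ (max a 0 - a) * (max b 0 - b) :=
      mul_le_mul (neg_anti h2) (neg_anti h4) (negp_nonneg _) (negp_nonneg _)
    linarith
  · rw [key]
    have t1 : max a 0 * max b 0 ≤ max aup 0 * max bup 0 :=
      mul_le_mul (pos_mono h2) (pos_mono h4) (posp_nonneg _) (posp_nonneg _)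
    have t2 : max alo 0 * (max bup 0 - bup) ≤ max a 0 * (max b 0 - b) :=
      mul_le_mul (pos_mono h1) (neg_anti h4) (negp_nonneg _) (posp_nonneg _)
    have t3 : (max aup 0 - aup) * max blo 0 ≤ (max a 0 - a) * max b 0 :=
      mul_le_mul (neg_anti h2) (pos_mono h3) (posp_nonneg _) (negp_nonneg _)
    have t4 : (max a 0 - a) * (max b 0 - b) ≤ (max alo 0 - alo) * (max blo 0 - blo) :=
      mul_le_mul (neg_anti h1) (neg_anti h3) (negp_nonneg _) (negp_nonneg _)
    linarith

/-- interval-matrix product bound. -/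
theorem interval_times_interval_matrix_bound {m n p : ℕ}
    (A Alo Aup : Matrix (Fin m) (Fin n) ℝ) (B Blo Bup : Matrix (Fin n) (Fin p) ℝ)
    (hAlo : ∀ i j, Alo i j ≤ A i j) (hAup : ∀ i j, A i j ≤ Aup i j)
    (hBlo : ∀ i j, Blo i j ≤ B i j) (hBup : ∀ i j, B i j ≤ Bup i j) :
    (∀ i j, (matPos Alo * matPos Blo - matPos Aup * matNeg Blo
              - matNeg Alo * matPos Bup + matNeg Aup * matNeg Bup) i j ≤ (A * B) i j) ∧
    (∀ i j, (A * B) i j ≤ (matPos Aup * matPos Bup - matPos Alo * matNeg Bup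
              - matNeg Aup * matPos Blo + matNeg Alo * matNeg Blo) i j) := by
  constructor
  · intro i j
    simp only [Matrix.add_apply, Matrix.sub_apply, Matrix.mul_apply, matPos, matNeg,
      Matrix.map_apply, ← Finset.sum_sub_distrib, ← Finset.sum_add_distrib]
    apply Finset.sum_le_sum
    intro k _
    exact (scalar_bound (A i k) (Alo i k) (Aup i k) (B k j) (Blo k j) (Bup k j)
      (hAlo i k) (hAup i k) (hBlo k j) (hBup k j)).1
  · intro i j
    simp only [Matrix.add_apply, Matrix.sub_apply, Matrix.mul_apply, matPos, matNeg,
      Matrix.map_apply, ← Finset.sum_sub_distrib, ← Finset.sum_add_distrib]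
    apply Finset.sum_le_sum
    intro k _
    exact (scalar_bound (A i k) (Alo i k) (Aup i k) (B k j) (Blo k j) (Bup k j)
      (hAlo i k) (hAup i k) (hBlo k j) (hBup k j)).2
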